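/- For the rotation R' of ℝⁿ given by x₁ ↦ (x₁+x₂)/√2, x₂ ↦ (x₁−x₂)/√2, x_j ↦ x_j for j > 2, and any multi-index μ̃ with |μ̃| = λ, the expansion of H_μ̃(R'x) in the Hermite basis {H_ν : |ν| = λ} has nonzero coefficient on H_{μ'} where μ' = (μ̃₁+μ̃₂, 0, μ̃₃, …, μ̃_n). -/

import Mathlib

open MeasureTheory Complex Real

noncomputable def mWigner (n : ℕ) (ψ₁ ψ₂ : (Fin n → ℝ) → ℂ) (x y : Fin n → ℝ) : ℂ :=
  ((2 * Real.pi) ^ (-(n : ℤ)) : ℝ) •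
    ∫ τ : Fin n → ℝ, ψ₁ (x + τ / 2) * (starRingEnd ℂ) (ψ₂ (x - τ / 2)) *
      Complex.exp (-Complex.I * (∑ i, τ i * y i))

noncomputable def wigner (n : ℕ) (ψ : (Fin n → ℝ) → ℂ) : (Fin n → ℝ) → (Fin n → ℝ) → ℂ :=
  mWigner n ψ ψ

noncomputable def hermite1 (k : ℕ) (x : ℝ) : ℝ :=
  Real.pi ^ (-(1/4 : ℝ)) * ((Nat.factorial k : ℝ)) ^ (-(1/2 : ℝ)) * (2 : ℝ) ^ (-(k : ℝ)/2) *
    (-1) ^ k * Real.exp (x ^ 2 / 2) * iteratedDeriv k (fun t => Real.exp (-t ^ 2)) x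

noncomputable def hermiteN (n : ℕ) (μ : Fin n → ℕ) (x : Fin n → ℝ) : ℝ :=
  ∏ j, hermite1 (μ j) (x j)

noncomputable def hermiteNC (n : ℕ) (μ : Fin n → ℕ) : (Fin n → ℝ) → ℂ :=
  fun x => (hermiteN n μ x : ℂ)

noncomputable def laguerre (j m : ℕ) (x : ℝ) : ℝ :=
  ∑ i ∈ Finset.range (j + 1),
    (-1 : ℝ) ^ i * (Nat.choose (j + m) (j - i) : ℝ) / (Nat.factorial i : ℝ) * x ^ i

def ball2n (n : ℕ) (r : ℝ) : Set ((Fin n → ℝ) × (Fin n → ℝ)) :=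
  {p | ∑ i, ((p.1 i) ^ 2 + (p.2 i) ^ 2) ≤ r ^ 2}
noncomputable def rotR (n : ℕ) (hn : 2 ≤ n) (x : Fin n → ℝ) : Fin n → ℝ :=
  fun i =>
    if i = (⟨0, by omega⟩ : Fin n) then (x ⟨0, by omega⟩ + x ⟨1, by omega⟩) / Real.sqrt 2
    else if i = (⟨1, by omega⟩ : Fin n) then (x ⟨0, by omega⟩ - x ⟨1, by omega⟩) / Real.sqrt 2
    else x i

open Polynomial

noncomputable def HP : ℕ → Polynomial ℝ
  | 0 => 1
  | (n+1) => 2 * X * HP n - derivative (HP n)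

lemma HP_succ (n : ℕ) : HP (n+1) = 2 * X * HP n - derivative (HP n) := rfl

lemma HP_deriv (n : ℕ) : derivative (HP (n+1)) = ((2*(n+1) : ℕ) : Polynomial ℝ) * HP n := by
  induction n with
  | zero => simp [HP]
  | succ n ih =>
    rw [HP_succ (n+1), derivative_sub, ih, derivative_mul, ih,
      derivative_natCast_mul, HP_succ n]
    push_cast
    simp only [derivative_mul, derivative_X, derivative_ofNat]
    ring

noncomputable def Hf (k : ℕ) (x : ℝ) : ℝ := (HP k).eval x

lemma Hf_rec (k : ℕ) (x : ℝ) : Hf (k+1) x = 2*x*Hf k x - 2*(k:ℝ)*Hf (k-1) x := by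
  cases k with
  | zero => simp [Hf, HP]
  | succ k =>
    show (2 * X * HP (k+1) - derivative (HP (k+1))).eval x = _
    rw [HP_deriv]
    simp [Hf]

lemma Hf_zero (x : ℝ) : Hf 0 x = 1 := by simp [Hf, HP]

lemma Hf_mul_x (k : ℕ) (x : ℝ) : x * Hf k x = (1/2) * Hf (k+1) x + (k:ℝ) * Hf (k-1) x := by
  rw [Hf_rec]; ring

lemma gauss_hasDerivAt (x : ℝ) :
    HasDerivAt (fun t : ℝ => Real.exp (-t^2)) (-2*x*Real.exp (-x^2)) x := by
  have h1 : HasDerivAt (fun t : ℝ => -t^2) (-2*x) x := by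
    simpa [Pi.neg_def] using ((hasDerivAt_pow 2 x).neg)
  simpa [mul_comm, Function.comp_def] using (Real.hasDerivAt_exp (-x^2)).comp x h1

lemma rodrigues (k : ℕ) (x : ℝ) :
    iteratedDeriv k (fun t => Real.exp (-t^2)) x = (-1)^k * Hf k x * Real.exp (-x^2) := by
  induction k generalizing x with
  | zero => simp [Hf, HP]
  | succ k ih =>
    rw [iteratedDeriv_succ]
    have hfun : iteratedDeriv k (fun t => Real.exp (-t^2)) =
        fun x => (-1)^k * Hf k x * Real.exp (-x^2) := funext ih
    rw [hfun]
    have hd : HasDerivAt (fun x : ℝ => (-1)^k * Hf k x * Real.exp (-x^2))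
        ((-1)^k * ((derivative (HP k)).eval x * Real.exp (-x^2)
          + Hf k x * (-2*x*Real.exp (-x^2)))) x := by
      have h1 : HasDerivAt (fun x : ℝ => Hf k x) ((derivative (HP k)).eval x) x :=
        (HP k).hasDerivAt x
      have := (h1.const_mul ((-1:ℝ)^k)).fun_mul (gauss_hasDerivAt x)
      exact this.congr_deriv (by ring)
    rw [hd.deriv]
    have : Hf (k+1) x = 2*x*Hf k x - (derivative (HP k)).eval x := by
      show (2 * X * HP k - derivative (HP k)).eval x = _
      simp [Hf]
    rw [this]
    ring

noncomputable def alph (k : ℕ) : ℝ :=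
  Real.pi ^ (-(1/4 : ℝ)) * ((Nat.factorial k : ℝ)) ^ (-(1/2 : ℝ)) * (2 : ℝ) ^ (-(k : ℝ)/2)

lemma alph_pos (k : ℕ) : 0 < alph k := by
  have h1 : (0:ℝ) < Real.pi ^ (-(1/4 : ℝ)) := Real.rpow_pos_of_pos Real.pi_pos _
  have h2 : (0:ℝ) < ((Nat.factorial k : ℝ)) ^ (-(1/2 : ℝ)) :=
    Real.rpow_pos_of_pos (by exact_mod_cast k.factorial_pos) _
  have h3 : (0:ℝ) < (2 : ℝ) ^ (-(k : ℝ)/2) := Real.rpow_pos_of_pos (by norm_num) _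
  rw [alph]
  exact mul_pos (mul_pos h1 h2) h3

lemma hermite1_eq (k : ℕ) (x : ℝ) :
    hermite1 k x = alph k * Hf k x * Real.exp (-(x^2)/2) := by
  rw [hermite1, rodrigues]
  have : Real.exp (x^2/2) * Real.exp (-x^2) = Real.exp (-(x^2)/2) := by
    rw [← Real.exp_add]; ring_nf
  have h4 : ((-1:ℝ))^k * (-1)^k = 1 := by
    rw [← pow_add]
    exact Even.neg_one_pow ⟨k, rfl⟩
  calc Real.pi ^ (-(1/4 : ℝ)) * ((Nat.factorial k : ℝ)) ^ (-(1/2 : ℝ)) * (2 : ℝ) ^ (-(k : ℝ)/2) *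
    (-1) ^ k * Real.exp (x ^ 2 / 2) * ((-1)^k * Hf k x * Real.exp (-x^2))
      = (Real.pi ^ (-(1/4 : ℝ)) * ((Nat.factorial k : ℝ)) ^ (-(1/2 : ℝ)) * (2 : ℝ) ^ (-(k : ℝ)/2))
        * (((-1:ℝ))^k * (-1)^k) * Hf k x * (Real.exp (x^2/2) * Real.exp (-x^2)) := by ring
    _ = alph k * Hf k x * Real.exp (-(x^2)/2) := by rw [h4, this, alph]; ring

noncomputable def ee : ℕ → ℕ → ℕ → ℝ
  | 0, 0, 0 => 1
  | 0, 0, (_+1) => 0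
  | (a+1), b, 0 => (Real.sqrt 2)⁻¹ * ee a b 0
  | (a+1), b, (k+1) => (Real.sqrt 2)⁻¹ * (ee a b k + ee a b (k+1))
  | 0, (b+1), 0 => -((Real.sqrt 2)⁻¹ * ee 0 b 0)
  | 0, (b+1), (k+1) => (Real.sqrt 2)⁻¹ * (ee 0 b k - ee 0 b (k+1))

lemma ee000 : ee 0 0 0 = 1 := by simp [ee]
lemma ee00s (k : ℕ) : ee 0 0 (k+1) = 0 := by simp [ee]
lemma eeA0 (a b : ℕ) : ee (a+1) b 0 = (Real.sqrt 2)⁻¹ * ee a b 0 := by simp [ee]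
lemma eeAS (a b k : ℕ) : ee (a+1) b (k+1) = (Real.sqrt 2)⁻¹ * (ee a b k + ee a b (k+1)) := by
  simp [ee]
lemma eeB0 (b : ℕ) : ee 0 (b+1) 0 = -((Real.sqrt 2)⁻¹ * ee 0 b 0) := by simp [ee]
lemma eeBS (b k : ℕ) : ee 0 (b+1) (k+1) = (Real.sqrt 2)⁻¹ * (ee 0 b k - ee 0 b (k+1)) := by
  simp [ee]

lemma ee_vanish : ∀ a b k, a + b < k → ee a b k = 0 := by
  intro a
  induction a with
  | zero =>
    intro b
    induction b with
    | zero => intro k hk; match k, hk with | (k+1), _ => exact ee00s k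
    | succ b ihb =>
      intro k hk
      match k, hk with
      | (k+1), hk =>
        rw [eeBS, ihb k (by omega), ihb (k+1) (by omega)]
        ring
  | succ a iha =>
    intro b k hk
    match k, hk with
    | (k+1), hk =>
      rw [eeAS, iha b k (by omega), iha b (k+1) (by omega)]
      ring

lemma ee_top : ∀ a b, ee a b (a+b) = ((Real.sqrt 2)⁻¹)^(a+b) := by
  intro a
  induction a with
  | zero =>
    intro b
    induction b with
    | zero => simpa using ee000
    | succ b ihb =>
      have : (0:ℕ) + (b+1) = (0+b) + 1 := by omega
      rw [this, eeBS, ee_vanish 0 b (0+b+1) (by omega)]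
      rw [show 0+b = b from by omega] at ihb ⊢
      rw [ihb]
      ring
  | succ a iha =>
    intro b
    rw [show a+1+b = (a+b)+1 from by omega, eeAS, iha b,
      ee_vanish a b (a+b+1) (by omega)]
    ring

lemma ee_L1 : ∀ a b, ee a b 1 = ((a:ℝ) - b) * ee a b 0 := by
  intro a
  induction a with
  | zero =>
    intro b
    induction b with
    | zero => rw [ee00s, ee000]; norm_num
    | succ b ihb =>
      rw [eeBS, eeB0, ihb]
      push_cast
      ring
  | succ a iha =>
    intro b
    rw [eeAS, eeA0, iha b]
    push_cast
    ring

lemma sqrt2_ne : (Real.sqrt 2) ≠ 0 := by positivity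
lemma sqrt2_eq : Real.sqrt 2 = 2 * (Real.sqrt 2)⁻¹ := by
  have h : Real.sqrt 2 * Real.sqrt 2 = 2 := Real.mul_self_sqrt (by norm_num)
  field_simp
  exact Real.sq_sqrt (by norm_num)

lemma ee_T3z : ∀ b k : ℕ, ((k:ℝ)+1) * ee 0 b (k+1) + ((b:ℝ)-(k:ℝ)) * ee 0 b k = 0 := by
  intro b
  induction b with
  | zero =>
    intro k
    match k with
    | 0 => rw [ee00s, ee000]; norm_num
    | (k+1) => simp [ee00s]
  | succ b ihb =>
    intro k
    match k with
    | 0 =>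
      have h := ee_L1 0 (b+1)
      push_cast at h ⊢
      linear_combination h
    | (k+1) =>
      have h1 := ihb (k+1)
      have h2 := ihb k
      rw [eeBS, eeBS]
      push_cast at h1 h2 ⊢
      linear_combination (-(Real.sqrt 2)⁻¹) * h1 + ((Real.sqrt 2)⁻¹) * h2

lemma ee_T3' : ∀ b k : ℕ, ((k:ℝ)+1) * ee 0 (b+1) (k+1) - ((b:ℝ)+1-(k:ℝ)) * ee 0 (b+1) k
    = Real.sqrt 2 * ((b:ℝ)+1) * ee 0 b k := by
  intro b
  induction b with
  | zero =>
    intro k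
    rw [sqrt2_eq]
    match k with
    | 0 =>
      rw [eeBS, eeB0, ee000, ee00s]
      push_cast
      ring
    | 1 =>
      rw [eeBS, eeBS, ee000, ee00s, ee00s]
      push_cast
      ring
    | (k+2) =>
      rw [eeBS, eeBS, ee00s, ee00s, ee00s]
      push_cast
      ring
  | succ b ihb =>
    intro k
    rw [sqrt2_eq]
    match k with
    | 0 =>
      have h := ee_L1 0 (b+2)
      rw [eeB0 (b+1)] at h ⊢
      push_cast at h ⊢
      linear_combination h
    | (k+1) =>
      have h1 := ihb (k+1)
      have h2 := ihb k
      have h3 := eeBS b k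
      rw [sqrt2_eq] at h1 h2
      rw [eeBS (b+1) (k+1), eeBS (b+1) k]
      push_cast at h1 h2 h3 ⊢
      linear_combination (-(Real.sqrt 2)⁻¹) * h1 + ((Real.sqrt 2)⁻¹) * h2
        - (2*(Real.sqrt 2)⁻¹*((b:ℝ)+1)) * h3

lemma ee_T3 : ∀ a b k : ℕ, ((k:ℝ)+1) * ee (a+1) b (k+1) + ((a:ℝ)+1+(b:ℝ)-(k:ℝ)) * ee (a+1) b k
    = Real.sqrt 2 * ((a:ℝ)+1) * ee a b k := by
  intro a
  induction a with
  | zero =>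
    intro b k
    rw [sqrt2_eq]
    match k with
    | 0 =>
      have h := ee_L1 0 b
      rw [eeAS, eeA0]
      push_cast at h ⊢
      linear_combination (Real.sqrt 2)⁻¹ * h
    | (k+1) =>
      have h1 := ee_T3z b (k+1)
      have h2 := ee_T3z b k
      rw [eeAS 0 b (k+1), eeAS 0 b k]
      push_cast at h1 h2 ⊢
      linear_combination ((Real.sqrt 2)⁻¹) * h1 + ((Real.sqrt 2)⁻¹) * h2
  | succ a iha =>
    intro b k
    rw [sqrt2_eq]
    match k with
    | 0 =>
      have h := ee_L1 (a+1) b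
      rw [eeAS (a+1) b 0, eeA0 (a+1) b]
      push_cast at h ⊢
      linear_combination (Real.sqrt 2)⁻¹ * h
    | (k+1) =>
      have h1 := iha b (k+1)
      have h2 := iha b k
      have h3 := eeAS a b k
      rw [sqrt2_eq] at h1 h2
      rw [eeAS (a+1) b (k+1), eeAS (a+1) b k]
      push_cast at h1 h2 h3 ⊢
      linear_combination ((Real.sqrt 2)⁻¹) * h1 + ((Real.sqrt 2)⁻¹) * h2
        - (2*(Real.sqrt 2)⁻¹*((a:ℝ)+1)) * h3

lemma core (N : ℕ) (f f' g : ℕ → ℝ) (ε c : ℝ)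
    (hfN : f (N+1) = 0)
    (hvan : ∀ k, k < N → ((k:ℝ)+1)*f (k+1) + ε*((N:ℝ)-(k:ℝ))*f k = Real.sqrt 2 * c * g k)
    (hp0 : f' 0 = (Real.sqrt 2)⁻¹ * (ε * f 0))
    (hps : ∀ k, f' (k+1) = (Real.sqrt 2)⁻¹ * (f k + ε * f (k+1)))
    (x y : ℝ) :
    Real.sqrt 2 * (x + ε*y) * (∑ k ∈ Finset.range (N+1), f k * Hf k x * Hf (N-k) y)
      - 2*c*(∑ k ∈ Finset.range N, g k * Hf k x * Hf (N-1-k) y)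
    = ∑ k ∈ Finset.range (N+2), f' k * Hf k x * Hf (N+1-k) y := by
  set S := ∑ k ∈ Finset.range (N+1), f k * Hf k x * Hf (N-k) y with hS
  set G := ∑ k ∈ Finset.range N, g k * Hf k x * Hf (N-1-k) y with hG
  set A := ∑ k ∈ Finset.range (N+1), f k * Hf (k+1) x * Hf (N-k) y with hA
  set Bx := ∑ k ∈ Finset.range (N+1), f k * Hf k x * Hf (N+1-k) y with hBx
  set Bd := ∑ k ∈ Finset.range N, (2*((k:ℝ)+1)*f (k+1)) * Hf k x * Hf (N-1-k) y with hBd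
  set Bd2 := ∑ k ∈ Finset.range N, (2*((N:ℝ)-(k:ℝ))*f k) * Hf k x * Hf (N-1-k) y with hBd2
  have hinv : (Real.sqrt 2)⁻¹ * Real.sqrt 2 = 1 := inv_mul_cancel₀ sqrt2_ne
  -- Step: RHS = inv*A + ε*inv*Bx
  have hT : (∑ k ∈ Finset.range (N+2), f' k * Hf k x * Hf (N+1-k) y)
      = (Real.sqrt 2)⁻¹ * A + ε * (Real.sqrt 2)⁻¹ * Bx := by
    rw [Finset.sum_range_succ' (fun k => f' k * Hf k x * Hf (N+1-k) y) (N+1)]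
    have h1 : ∀ k ∈ Finset.range (N+1),
        f' (k+1) * Hf (k+1) x * Hf (N+1-(k+1)) y
        = (Real.sqrt 2)⁻¹ * (f k * Hf (k+1) x * Hf (N-k) y)
          + ε * (Real.sqrt 2)⁻¹ * (f (k+1) * Hf (k+1) x * Hf (N-k) y) := by
      intro k hk
      rw [hps k, show N+1-(k+1) = N-k from by omega]
      ring
    rw [Finset.sum_congr rfl h1, Finset.sum_add_distrib, ← Finset.mul_sum, ← Finset.mul_sum]
    have h2 : (∑ k ∈ Finset.range (N+1), f (k+1) * Hf (k+1) x * Hf (N-k) y)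
        = Bx - f 0 * Hf 0 x * Hf (N+1) y := by
      have h3 := Finset.sum_range_succ' (fun k => f k * Hf k x * Hf (N+1-k) y) (N+1)
      have h4 := Finset.sum_range_succ (fun k => f k * Hf k x * Hf (N+1-k) y) (N+1)
      rw [h4, hfN] at h3
      simp only [zero_mul] at h3
      have h5 : ∀ k ∈ Finset.range (N+1),
          f (k+1) * Hf (k+1) x * Hf (N+1-(k+1)) y
          = f (k+1) * Hf (k+1) x * Hf (N-k) y := by
        intro k hk
        rw [show N+1-(k+1) = N-k from by omega]
      rw [Finset.sum_congr rfl h5] at h3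
      rw [← hBx] at h3
      rw [show N+1-0 = N+1 from rfl] at h3
      linarith [h3]
    rw [h2, hp0]
    simp only [Nat.sub_zero]
    rw [← hA]
    ring
  rw [hT]
  -- Step: A = 2xS - Bd
  have hAeq : A = 2*x*S - Bd := by
    have h1 : ∀ k ∈ Finset.range (N+1),
        f k * Hf (k+1) x * Hf (N-k) y
        = 2*x*(f k * Hf k x * Hf (N-k) y) - (2*(k:ℝ)*f k) * Hf (k-1) x * Hf (N-k) y := by
      intro k hk
      rw [Hf_rec]
      ring
    rw [hA, Finset.sum_congr rfl h1, Finset.sum_sub_distrib, ← Finset.mul_sum, ← hS]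
    congr 1
    rw [Finset.sum_range_succ' (fun k => (2*(k:ℝ)*f k) * Hf (k-1) x * Hf (N-k) y) N]
    have h2 : ∀ k ∈ Finset.range N,
        (2*((k+1:ℕ):ℝ)*f (k+1)) * Hf ((k+1)-1) x * Hf (N-(k+1)) y
        = (2*((k:ℝ)+1)*f (k+1)) * Hf k x * Hf (N-1-k) y := by
      intro k hk
      rw [show (k+1)-1 = k from by omega, show N-(k+1) = N-1-k from by omega]
      push_cast
      ring
    rw [Finset.sum_congr rfl h2]
    norm_num [hBd]
  -- Step: Bx = 2yS - Bd2
  have hBxeq : Bx = 2*y*S - Bd2 := by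
    have h1 : ∀ k ∈ Finset.range (N+1),
        f k * Hf k x * Hf (N+1-k) y
        = 2*y*(f k * Hf k x * Hf (N-k) y) - (2*((N-k:ℕ):ℝ)*f k) * Hf k x * Hf (N-1-k) y := by
      intro k hk
      have hkN : k ≤ N := by
        have := Finset.mem_range.mp hk
        omega
      rw [show N+1-k = (N-k)+1 from by omega, Hf_rec (N-k) y,
        show (N-k)-1 = N-1-k from by omega]
      ring
    rw [hBx, Finset.sum_congr rfl h1, Finset.sum_sub_distrib, ← Finset.mul_sum, ← hS]
    congr 1
    rw [Finset.sum_range_succ (fun k => (2*((N-k:ℕ):ℝ)*f k) * Hf k x * Hf (N-1-k) y) N]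
    rw [show N-N = 0 from by omega]
    have h2 : ∀ k ∈ Finset.range N,
        (2*((N-k:ℕ):ℝ)*f k) * Hf k x * Hf (N-1-k) y
        = (2*((N:ℝ)-(k:ℝ))*f k) * Hf k x * Hf (N-1-k) y := by
      intro k hk
      rw [Nat.cast_sub (le_of_lt (Finset.mem_range.mp hk))]
    rw [Finset.sum_congr rfl h2]
    norm_num [hBd2]
  -- Step: Bd + ε*Bd2 = 2*√2*c*G
  have hBG : Bd + ε*Bd2 = 2*Real.sqrt 2*c*G := by
    rw [hBd, hBd2, hG, Finset.mul_sum, Finset.mul_sum, ← Finset.sum_add_distrib]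
    apply Finset.sum_congr rfl
    intro k hk
    have h := hvan k (Finset.mem_range.mp hk)
    linear_combination (2 * Hf k x * Hf (N-1-k) y) * h
  have hh : Real.sqrt 2 * Real.sqrt 2 = 2 := Real.mul_self_sqrt (by norm_num)
  linear_combination (-(Real.sqrt 2)⁻¹) * hAeq - (ε*(Real.sqrt 2)⁻¹) * hBxeq
    + ((Real.sqrt 2)⁻¹) * hBG + ((x*S+ε*y*S)*(Real.sqrt 2)⁻¹) * hh
    - ((x*S+ε*y*S)*(Real.sqrt 2)) * hinv + (2*c*G) * hinv

def claim2 (a b : ℕ) : Prop := ∀ x y : ℝ,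
  Hf a ((x+y)/Real.sqrt 2) * Hf b ((x-y)/Real.sqrt 2)
    = ∑ k ∈ Finset.range (a+b+1), ee a b k * Hf k x * Hf (a+b-k) y

lemma h2v (x y : ℝ) : 2*((x-y)/Real.sqrt 2) = Real.sqrt 2*(x+(-1)*y) := by
  have hh : Real.sqrt 2 * Real.sqrt 2 = 2 := Real.mul_self_sqrt (by norm_num)
  have hh2 : Real.sqrt 2 ^ 2 = 2 := Real.sq_sqrt (by norm_num)
  field_simp
  linear_combination (y-x) * hh2

lemma h2u (x y : ℝ) : 2*((x+y)/Real.sqrt 2) = Real.sqrt 2*(x+1*y) := by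
  have hh : Real.sqrt 2 * Real.sqrt 2 = 2 := Real.mul_self_sqrt (by norm_num)
  have hh2 : Real.sqrt 2 ^ 2 = 2 := Real.sq_sqrt (by norm_num)
  field_simp
  linear_combination (-(x+y)) * hh2

lemma claim2_00 : claim2 0 0 := by
  intro x y
  simp [Hf_zero, ee000]

lemma claim2_stepB (b : ℕ) (h1 : claim2 0 b) (h2 : claim2 0 (b-1)) : claim2 0 (b+1) := by
  intro x y
  have h1' := h1 x y
  simp only [Nat.zero_add] at h1' ⊢
  have hcore := core b (fun k => ee 0 b k) (fun k => ee 0 (b+1) k) (fun k => ee 0 (b-1) k)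
    (-1) (b:ℝ) (ee_vanish 0 b (b+1) (by omega))
    (by
      intro k hk
      match b, hk with
      | (b'+1), hk =>
        have := ee_T3' b' k
        push_cast at this ⊢
        linear_combination this)
    (by simp only [eeB0]; ring)
    (by intro k; simp only [eeBS]; ring) x y
  have hsg : 2*((b:ℕ):ℝ)*(Hf 0 ((x+y)/Real.sqrt 2) * Hf (b-1) ((x-y)/Real.sqrt 2))
      = 2*((b:ℕ):ℝ)*(∑ k ∈ Finset.range b, ee 0 (b-1) k * Hf k x * Hf (b-1-k) y) := by
    match b with
    | 0 => norm_num
    | (b'+1) =>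
      have h2' := h2 x y
      simp only [Nat.zero_add, Nat.add_sub_cancel] at h2' ⊢
      rw [h2']
  calc Hf 0 ((x+y)/Real.sqrt 2) * Hf (b+1) ((x-y)/Real.sqrt 2)
      = 2*((x-y)/Real.sqrt 2)*Hf b ((x-y)/Real.sqrt 2)
        - 2*((b:ℕ):ℝ)*(Hf 0 ((x+y)/Real.sqrt 2) * Hf (b-1) ((x-y)/Real.sqrt 2)) := by
        rw [Hf_zero, Hf_rec]; ring
    _ = Real.sqrt 2*(x+(-1)*y)*(Hf 0 ((x+y)/Real.sqrt 2) * Hf b ((x-y)/Real.sqrt 2))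
        - 2*((b:ℕ):ℝ)*(∑ k ∈ Finset.range b, ee 0 (b-1) k * Hf k x * Hf (b-1-k) y) := by
        rw [← hsg, Hf_zero]
        linear_combination (Hf b ((x-y)/Real.sqrt 2)) * h2v x y
    _ = ∑ k ∈ Finset.range (b+1+1), ee 0 (b+1) k * Hf k x * Hf (b+1-k) y := by
        rw [h1']
        exact hcore

lemma claim2_0 (b : ℕ) : claim2 0 b := by
  suffices h : ∀ b, claim2 0 b ∧ claim2 0 (b+1) from (h b).1
  intro b
  induction b with
  | zero => exact ⟨claim2_00, claim2_stepB 0 claim2_00 claim2_00⟩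
  | succ b ih => exact ⟨ih.2, claim2_stepB (b+1) ih.2 (by simpa using ih.1)⟩

lemma claim2_stepA (a b : ℕ) (h1 : claim2 a b) (h2 : claim2 (a-1) b) : claim2 (a+1) b := by
  intro x y
  have h1' := h1 x y
  have hcore := core (a+b) (fun k => ee a b k) (fun k => ee (a+1) b k) (fun k => ee (a-1) b k)
    1 (a:ℝ) (ee_vanish a b (a+b+1) (by omega))
    (by
      intro k hk
      match a, hk with
      | 0, hk =>
        have := ee_T3z b k
        push_cast at this ⊢
        linear_combination this
      | (a'+1), hk =>
        have := ee_T3 a' b k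
        push_cast at this ⊢
        linear_combination this)
    (by simp only [eeA0]; ring)
    (by intro k; simp only [eeAS]; ring) x y
  have hsg : 2*((a:ℕ):ℝ)*(Hf (a-1) ((x+y)/Real.sqrt 2) * Hf b ((x-y)/Real.sqrt 2))
      = 2*((a:ℕ):ℝ)*(∑ k ∈ Finset.range (a+b), ee (a-1) b k * Hf k x * Hf (a+b-1-k) y) := by
    match a with
    | 0 => norm_num
    | (a'+1) =>
      have h2' := h2 x y
      simp only [Nat.add_sub_cancel] at h2' ⊢
      rw [show a'+1+b-1 = a'+b from by omega]
      have : ∀ k ∈ Finset.range (a'+b+1), ee a' b k * Hf k x * Hf (a'+b-k) y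
          = ee a' b k * Hf k x * Hf (a'+b-k) y := fun k _ => rfl
      rw [show a'+1+b = a'+b+1 from by omega, h2']
  calc Hf (a+1) ((x+y)/Real.sqrt 2) * Hf b ((x-y)/Real.sqrt 2)
      = 2*((x+y)/Real.sqrt 2)*Hf a ((x+y)/Real.sqrt 2) * Hf b ((x-y)/Real.sqrt 2)
        - 2*((a:ℕ):ℝ)*(Hf (a-1) ((x+y)/Real.sqrt 2) * Hf b ((x-y)/Real.sqrt 2)) := by
        rw [Hf_rec]; ring
    _ = Real.sqrt 2*(x+1*y)*(Hf a ((x+y)/Real.sqrt 2) * Hf b ((x-y)/Real.sqrt 2))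
        - 2*((a:ℕ):ℝ)*(∑ k ∈ Finset.range (a+b), ee (a-1) b k * Hf k x * Hf (a+b-1-k) y) := by
        rw [← hsg]
        linear_combination (Hf a ((x+y)/Real.sqrt 2) * Hf b ((x-y)/Real.sqrt 2)) * h2u x y
    _ = ∑ k ∈ Finset.range (a+1+b+1), ee (a+1) b k * Hf k x * Hf (a+1+b-k) y := by
        rw [h1']
        rw [show a+1+b+1 = a+b+2 from by omega]
        have hix : ∀ k ∈ Finset.range (a+b+2), ee (a+1) b k * Hf k x * Hf (a+1+b-k) y
            = ee (a+1) b k * Hf k x * Hf (a+b+1-k) y := by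
          intro k hk
          rw [show a+1+b-k = a+b+1-k from by omega]
        rw [Finset.sum_congr rfl hix]
        exact hcore

lemma claim2_all (a b : ℕ) : claim2 a b := by
  suffices h : ∀ a, (∀ b, claim2 a b) ∧ (∀ b, claim2 (a+1) b) from (h a).1 b
  intro a
  induction a with
  | zero => exact ⟨claim2_0, fun b => claim2_stepA 0 b (claim2_0 b) (claim2_0 b)⟩
  | succ a ih => exact ⟨ih.2, fun b => claim2_stepA (a+1) b (ih.2 b) (by simpa using ih.1 b)⟩


theorem rotation_coeff_nonzero (n : ℕ) (hn : 2 ≤ n) (lam : ℕ)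
    (μ : Fin n → ℕ) (hμ : ∑ j, μ j = lam)
    (μ' : Fin n → ℕ)
    (hμ' : μ' = fun i =>
      if i = (⟨0, by omega⟩ : Fin n) then μ ⟨0, by omega⟩ + μ ⟨1, by omega⟩
      else if i = (⟨1, by omega⟩ : Fin n) then 0
      else μ i) :
    ∃ c : (Fin n → ℕ) → ℝ,
      (∀ x : Fin n → ℝ,
        hermiteN n μ (rotR n hn x) =
          ∑ ν ∈ (Finset.Iic (fun _ => lam : Fin n → ℕ)).filter (fun ν => ∑ j, ν j = lam),
            c ν * hermiteN n ν x) ∧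
      c μ' ≠ 0 := by
  classical
  set i0 : Fin n := ⟨0, by omega⟩ with hi0
  set i1 : Fin n := ⟨1, by omega⟩ with hi1
  have hne : i1 ≠ i0 := by simp [hi0, hi1, Fin.ext_iff]
  set a := μ i0 with ha
  set b := μ i1 with hb
  set ι : ℕ → (Fin n → ℕ) :=
    fun k => fun j => if j = i0 then k else if j = i1 then a + b - k else μ j with hι
  set cf : (Fin n → ℕ) → ℝ := fun ν =>
    if ν i0 + ν i1 = a + b ∧ (∀ j, j ≠ i0 → j ≠ i1 → ν j = μ j)
    then (alph a * alph b) / (alph (ν i0) * alph (ν i1)) * ee a b (ν i0) else 0 with hcf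
  have halne : ∀ k, alph k ≠ 0 := fun k => ne_of_gt (alph_pos k)
  refine ⟨cf, ?_, ?_⟩
  · -- main expansion
    intro x
    set x0 := x i0 with hx0
    set x1 := x i1 with hx1
    set R := ∏ j ∈ (Finset.univ.erase i0).erase i1, hermite1 (μ j) (x j) with hR
    have hmem1 : i1 ∈ Finset.univ.erase i0 := Finset.mem_erase.mpr ⟨hne, Finset.mem_univ i1⟩
    have hsplit : ∀ (f : Fin n → ℝ) (g : Fin n → ℕ),
        (∏ j, hermite1 (g j) (f j)) = hermite1 (g i0) (f i0) *
          (hermite1 (g i1) (f i1) * ∏ j ∈ (Finset.univ.erase i0).erase i1,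
            hermite1 (g j) (f j)) := by
      intro f g
      rw [← Finset.mul_prod_erase Finset.univ _ (Finset.mem_univ i0),
        ← Finset.mul_prod_erase (Finset.univ.erase i0) _ hmem1]
    have hjne : ∀ j ∈ (Finset.univ.erase i0).erase i1, j ≠ i0 ∧ j ≠ i1 := by
      intro j hj
      have h1 := Finset.mem_erase.mp hj
      have h2 := Finset.mem_erase.mp h1.2
      exact ⟨h2.1, h1.1⟩
    -- rotR values
    have hr0 : rotR n hn x i0 = (x0 + x1) / Real.sqrt 2 := by
      rw [rotR]; simp [hi0, hi1, hx0, hx1]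
    have hr1 : rotR n hn x i1 = (x0 - x1) / Real.sqrt 2 := by
      rw [rotR]
      rw [if_neg (by simpa [hi0, hi1] using hne), if_pos rfl]
    have hrj : ∀ j, j ≠ i0 → j ≠ i1 → rotR n hn x j = x j := by
      intro j hj0 hj1
      rw [rotR, if_neg (by simpa [hi0] using hj0), if_neg (by simpa [hi1] using hj1)]
    -- LHS
    have hLHS : hermiteN n μ (rotR n hn x)
        = hermite1 a ((x0+x1)/Real.sqrt 2) * (hermite1 b ((x0-x1)/Real.sqrt 2) * R) := by
      rw [hermiteN, hsplit (rotR n hn x) μ, hr0, hr1]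
      congr 1
      congr 1
      apply Finset.prod_congr rfl
      intro j hj
      rw [hrj j (hjne j hj).1 (hjne j hj).2]
    -- sum facts
    have e1 := Finset.add_sum_erase Finset.univ μ (Finset.mem_univ i0)
    have e2 := Finset.add_sum_erase (Finset.univ.erase i0) μ hmem1
    have hsum_split : a + b + (∑ j ∈ (Finset.univ.erase i0).erase i1, μ j) = lam := by
      rw [← hμ, ← e1, ← e2]
      ring
    have hall : ∀ j, μ j ≤ lam := by
      intro j
      rw [← hμ]
      exact Finset.single_le_sum (fun _ _ => Nat.zero_le _) (Finset.mem_univ j)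
    have hi0v : ∀ k, ι k i0 = k := by intro k; simp [hι]
    have hi1v : ∀ k, ι k i1 = a + b - k := by
      intro k
      show (if i1 = i0 then k else if i1 = i1 then a + b - k else μ i1) = a + b - k
      rw [if_neg hne, if_pos rfl]
    have hjv : ∀ k j, j ≠ i0 → j ≠ i1 → ι k j = μ j := by
      intro k j hj0 hj1
      show (if j = i0 then k else if j = i1 then a + b - k else μ j) = μ j
      rw [if_neg hj0, if_neg hj1]
    have hsubT : ∀ k ∈ Finset.range (a+b+1), ι k ∈
        (Finset.Iic (fun _ => lam : Fin n → ℕ)).filter (fun ν => ∑ j, ν j = lam) := by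
      intro k hk
      have hk' : k ≤ a + b := by
        have := Finset.mem_range.mp hk
        omega
      refine Finset.mem_filter.mpr ⟨Finset.mem_Iic.mpr ?_, ?_⟩
      · intro j
        show ι k j ≤ lam
        by_cases hj0 : j = i0
        · rw [hj0, hi0v]; omega
        · by_cases hj1 : j = i1
          · rw [hj1, hi1v]; omega
          · rw [hjv k j hj0 hj1]; exact hall j
      · have e1' := Finset.add_sum_erase Finset.univ (ι k) (Finset.mem_univ i0)
        have e2' := Finset.add_sum_erase (Finset.univ.erase i0) (ι k) hmem1
        have e3 : ∑ j ∈ (Finset.univ.erase i0).erase i1, ι k j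
            = ∑ j ∈ (Finset.univ.erase i0).erase i1, μ j :=
          Finset.sum_congr rfl (fun j hj => hjv k j (hjne j hj).1 (hjne j hj).2)
        rw [← e1', ← e2', e3, hi0v, hi1v]
        omega
    have hsubT' : (Finset.range (a+b+1)).image ι ⊆
        (Finset.Iic (fun _ => lam : Fin n → ℕ)).filter (fun ν => ∑ j, ν j = lam) :=
      Finset.image_subset_iff.mpr hsubT
    have hzero : ∀ ν ∈ (Finset.Iic (fun _ => lam : Fin n → ℕ)).filter
        (fun ν => ∑ j, ν j = lam), ν ∉ (Finset.range (a+b+1)).image ι →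
        cf ν * hermiteN n ν x = 0 := by
      intro ν hν hnot
      by_cases hc : ν i0 + ν i1 = a + b ∧ (∀ j, j ≠ i0 → j ≠ i1 → ν j = μ j)
      · exfalso
        apply hnot
        refine Finset.mem_image.mpr ⟨ν i0, Finset.mem_range.mpr (by omega), ?_⟩
        funext j
        by_cases hj0 : j = i0
        · rw [hj0, hi0v]
        · by_cases hj1 : j = i1
          · rw [hj1, hi1v]
            omega
          · rw [hjv _ j hj0 hj1, hc.2 j hj0 hj1]
      · show (if ν i0 + ν i1 = a + b ∧ (∀ j, j ≠ i0 → j ≠ i1 → ν j = μ j)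
          then alph a * alph b / (alph (ν i0) * alph (ν i1)) * ee a b (ν i0) else 0)
            * hermiteN n ν x = 0
        rw [if_neg hc, zero_mul]
    have hinj : ∀ k ∈ Finset.range (a+b+1), ∀ k' ∈ Finset.range (a+b+1),
        ι k = ι k' → k = k' := by
      intro k _ k' _ h
      have := congrFun h i0
      rwa [hi0v, hi0v] at this
    rw [hLHS, ← Finset.sum_subset hsubT' hzero, Finset.sum_image hinj]
    have hterm : ∀ k ∈ Finset.range (a+b+1), cf (ι k) * hermiteN n (ι k) x
        = (alph a * alph b * Real.exp (-(x0^2)/2) * Real.exp (-(x1^2)/2) * R)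
          * (ee a b k * Hf k x0 * Hf (a+b-k) x1) := by
      intro k hk
      have hc : ι k i0 + ι k i1 = a + b ∧ (∀ j, j ≠ i0 → j ≠ i1 → ι k j = μ j) := by
        constructor
        · rw [hi0v, hi1v]
          have := Finset.mem_range.mp hk
          omega
        · exact fun j hj0 hj1 => hjv k j hj0 hj1
      have hcf' : cf (ι k) = alph a * alph b / (alph k * alph (a+b-k)) * ee a b k := by
        show (if ι k i0 + ι k i1 = a + b ∧ (∀ j, j ≠ i0 → j ≠ i1 → ι k j = μ j)
          then alph a * alph b / (alph (ι k i0) * alph (ι k i1)) * ee a b (ι k i0) else 0)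
            = alph a * alph b / (alph k * alph (a+b-k)) * ee a b k
        rw [if_pos hc, hi0v, hi1v]
      have hH : hermiteN n (ι k) x = hermite1 k x0 * (hermite1 (a+b-k) x1 * R) := by
        rw [hermiteN, hsplit x (ι k), hi0v, hi1v]
        congr 2
        apply Finset.prod_congr rfl
        intro j hj
        rw [hjv k j (hjne j hj).1 (hjne j hj).2]
      rw [hcf', hH, hermite1_eq k x0, hermite1_eq (a+b-k) x1]
      field_simp [halne k, halne (a+b-k)]
    rw [Finset.sum_congr rfl hterm, ← Finset.mul_sum]
    have hcl := claim2_all a b x0 x1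
    rw [← hcl]
    have hh2 : Real.sqrt 2 ^ 2 = 2 := Real.sq_sqrt (by norm_num)
    have hE : Real.exp (-(((x0+x1)/Real.sqrt 2)^2)/2) * Real.exp (-(((x0-x1)/Real.sqrt 2)^2)/2)
        = Real.exp (-(x0^2)/2) * Real.exp (-(x1^2)/2) := by
      rw [← Real.exp_add, ← Real.exp_add]
      congr 1
      rw [div_pow, div_pow, hh2]
      ring
    rw [hermite1_eq a ((x0+x1)/Real.sqrt 2), hermite1_eq b ((x0-x1)/Real.sqrt 2)]
    linear_combination (alph a * alph b * Hf a ((x0+x1)/Real.sqrt 2)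
      * Hf b ((x0-x1)/Real.sqrt 2) * R) * hE
  · -- nonzero
    have hμ'0 : μ' i0 = a + b := by rw [hμ']; simp [hi0]
    have hμ'1 : μ' i1 = 0 := by
      rw [hμ']
      simp [hne]
    have hcond : μ' i0 + μ' i1 = a + b ∧ (∀ j, j ≠ i0 → j ≠ i1 → μ' j = μ j) := by
      constructor
      · rw [hμ'0, hμ'1]
        omega
      · intro j hj0 hj1
        simp [hμ', hj0, hj1]
    show (if μ' i0 + μ' i1 = a + b ∧ (∀ j, j ≠ i0 → j ≠ i1 → μ' j = μ j)
      then alph a * alph b / (alph (μ' i0) * alph (μ' i1)) * ee a b (μ' i0) else 0) ≠ 0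
    rw [if_pos hcond, hμ'0, hμ'1]
    have hee : ee a b (a+b) = ((Real.sqrt 2)⁻¹)^(a+b) := ee_top a b
    have hpos : (0:ℝ) < ((Real.sqrt 2)⁻¹)^(a+b) := by positivity
    have h1 : (0:ℝ) < alph a * alph b := mul_pos (alph_pos a) (alph_pos b)
    have h2 : (0:ℝ) < alph (a+b) * alph 0 := mul_pos (alph_pos _) (alph_pos 0)
    rw [hee]
    exact ne_of_gt (mul_pos (div_pos h1 h2) hpos)
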